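/- Let D₂(q) = ∏_{m≥1}(1-q^{2m})²/(1-q^m)⁷ = ∑ d₂(n)q^n, let 𝒜(q) = q⁶·D₂(q)/D₂(q^{49}), and for α ≥ 1 let L_{2α}(q) = (1/D₂(q))·∑_{n≥0} d₂(7^{2α}n + λ_{2α}) q^{n+1} with λ_{2α} = (1+7^{2α+1})/8. Then U₇(𝒜 · L_{2α}) = (1/D₂(q⁷))·∑_{n≥0} d₂(7^{2α+1}n + λ_{2α+1}) q^{n+1}, where λ_{2α+1} = (1+7^{2α+1})/8. -/

import Mathlib

open PowerSeries Finset

lemma Uop_mul_expand' (f g : PowerSeries ℤ) (n : ℕ) :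
    (∑ p ∈ Finset.HasAntidiagonal.antidiagonal n, PowerSeries.coeff (R := ℤ) (7 * p.1) f * PowerSeries.coeff (R := ℤ) p.2 g) =
    ∑ p ∈ Finset.HasAntidiagonal.antidiagonal (7 * n), PowerSeries.coeff (R := ℤ) p.1 f *
      (if 7 ∣ p.2 then PowerSeries.coeff (R := ℤ) (p.2 / 7) g else 0) := by
  simp only [mul_ite, mul_zero]
  rw [← Finset.sum_filter]
  refine Finset.sum_bij' (fun p _ => ((7 * p.1 : ℕ), (7 * p.2 : ℕ)))
    (fun p _ => (p.1 / 7, p.2 / 7)) ?_ ?_ ?_ ?_ ?_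
  · intro p hp
    simp only [Finset.mem_filter, Finset.HasAntidiagonal.mem_antidiagonal] at hp ⊢
    omega
  · intro p hp
    simp only [Finset.mem_filter, Finset.HasAntidiagonal.mem_antidiagonal] at hp ⊢
    omega
  · intro p hp
    simp only [Finset.HasAntidiagonal.mem_antidiagonal] at hp
    simp
  · intro p hp
    simp only [Finset.mem_filter, Finset.HasAntidiagonal.mem_antidiagonal] at hp
    obtain ⟨h1, h2⟩ := hp
    have : 7 ∣ p.1 := by omega
    ext <;> simp <;> omega
  · intro p hp
    simp

/-- `d` is the coefficient sequence of `D₂(q) = ∏_{m≥1} (1-q^{2m})^2 / (1-q^m)^7`. -/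
def IsD2 (d : ℕ → ℤ) : Prop :=
  ∀ n : ℕ,
    PowerSeries.coeff (R := ℤ) n
        ((PowerSeries.mk d) * ∏ m ∈ Finset.range (n + 1), (1 - X ^ (m + 1)) ^ 7) =
      PowerSeries.coeff (R := ℤ) n
        (∏ m ∈ Finset.range (n + 1), (1 - X ^ (2 * (m + 1))) ^ 2)

/-- The operator `U₇`. -/
noncomputable def Uop (ℓ : ℕ) (f : PowerSeries ℤ) : PowerSeries ℤ :=
  PowerSeries.mk fun n => PowerSeries.coeff (R := ℤ) (ℓ * n) f

/-- `expand ℓ f` is the series `f(q^ℓ)`. -/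
noncomputable def expandPS (ℓ : ℕ) (f : PowerSeries ℤ) : PowerSeries ℤ :=
  PowerSeries.mk fun n => if ℓ ∣ n then PowerSeries.coeff (R := ℤ) (n / ℓ) f else 0

lemma Uop_mul_expand (f g : PowerSeries ℤ) :
    Uop 7 f * g = Uop 7 (f * expandPS 7 g) := by
  ext n
  rw [Uop, Uop, PowerSeries.coeff_mk, PowerSeries.coeff_mul, PowerSeries.coeff_mul]
  simpa [expandPS] using Uop_mul_expand' f g n

lemma expand_expand (g : PowerSeries ℤ) :
    expandPS 7 (expandPS 7 g) = expandPS 49 g := by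
  ext n
  simp only [expandPS, PowerSeries.coeff_mk]
  by_cases h49 : 49 ∣ n
  · have h7 : 7 ∣ n := dvd_trans (by norm_num) h49
    have h7' : 7 ∣ n / 7 := by omega
    rw [if_pos h7, if_pos h7', if_pos h49, Nat.div_div_eq_div_mul]
  · rw [if_neg h49]
    by_cases h7 : 7 ∣ n
    · rw [if_pos h7, if_neg (by omega)]
    · rw [if_neg h7]

theorem U7_even_step (d : ℕ → ℤ) (hd : IsD2 d)
    (A : PowerSeries ℤ)
    (hA : A * expandPS 49 (PowerSeries.mk d) = X ^ 6 * PowerSeries.mk d)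
    (α : ℕ) (hα : 1 ≤ α) (L : PowerSeries ℤ)
    (hL : L * PowerSeries.mk d =
      PowerSeries.mk fun n =>
        if n = 0 then 0 else d (7 ^ (2 * α) * (n - 1) + (1 + 7 ^ (2 * α + 1)) / 8)) :
    Uop 7 (A * L) * expandPS 7 (PowerSeries.mk d) =
      PowerSeries.mk fun n =>
        if n = 0 then 0 else d (7 ^ (2 * α + 1) * (n - 1) + (1 + 7 ^ (2 * α + 1)) / 8) := by
  rw [Uop_mul_expand, expand_expand]
  have key : A * L * expandPS 49 (PowerSeries.mk d) =
      X ^ 6 * (L * PowerSeries.mk d) := by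
    rw [mul_right_comm, hA]; ring
  rw [key, hL]
  ext n
  rw [Uop, PowerSeries.coeff_mk, PowerSeries.coeff_mk]
  rcases Nat.eq_zero_or_pos n with rfl | hn
  · simp
  · rw [if_neg (by omega)]
    have h : 7 * n = (7 * n - 6) + 6 := by omega
    rw [h, PowerSeries.coeff_X_pow_mul, PowerSeries.coeff_mk,
      if_neg (by omega)]
    congr 1
    have : 7 * n - 6 - 1 = 7 * (n - 1) := by omega
    rw [this, ← mul_assoc, ← pow_succ]
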